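/- Let c > 0, b > c, Δ > 0, and let f : ℝ → ℝ be continuous with |f(t)| ≤ c for all t. Then for every s ∈ ℝ there exists a unique t > s such that ∫_{s}^{t} (f(u) + b) du = Δ; moreover this t satisfies Δ/(b+c) ≤ t − s ≤ Δ/(b−c). -/
import Mathlib


open MeasureTheory intervalIntegral

/-- If `f` is continuous with `|f| ≤ c`, and `b > c > 0`, `Δ > 0`, then from
any reset instant `s` there is a unique next firing instant `t > s` with
`∫_{s}^{t} (f(u) + b) du = Δ`; moreover any such firing instant satisfies
`Δ/(b+c) ≤ t - s ≤ Δ/(b-c)`. -/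
theorem iftem_next_firing_exists_unique
    (c b Δ : ℝ) (hc : 0 < c) (hbc : c < b) (hΔ : 0 < Δ)
    (f : ℝ → ℝ) (hf : Continuous f) (hbd : ∀ t, |f t| ≤ c) :
    ∀ s : ℝ,
      (∃! t : ℝ, s < t ∧ (∫ u in s..t, (f u + b)) = Δ) ∧
      (∀ t : ℝ, s < t → (∫ u in s..t, (f u + b)) = Δ →
        Δ / (b + c) ≤ t - s ∧ t - s ≤ Δ / (b - c)) := by
  intro s
  set g : ℝ → ℝ := fun u => f u + b with hg
  have hgc : Continuous g := hf.add continuous_const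
  have hint : ∀ a t : ℝ, IntervalIntegrable g volume a t := fun a t => hgc.intervalIntegrable a t
  have hbound : ∀ a t : ℝ, a ≤ t → (b - c) * (t - a) ≤ (∫ u in a..t, g u) ∧ (∫ u in a..t, g u) ≤ (b + c) * (t - a) := by
    intro a t hat
    constructor
    · have h1 : (∫ _ in a..t, (b - c)) ≤ ∫ u in a..t, g u := by
        apply intervalIntegral.integral_mono_on hat intervalIntegrable_const (hint a t)
        intro u _
        have := abs_le.mp (hbd u)
        simp only [hg]; linarith
      rw [intervalIntegral.integral_const, smul_eq_mul] at h1
      linarith [mul_comm (t - a) (b - c)]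
    · have h2 : (∫ u in a..t, g u) ≤ ∫ _ in a..t, (b + c) := by
        apply intervalIntegral.integral_mono_on hat (hint a t) intervalIntegrable_const
        intro u _
        have := abs_le.mp (hbd u)
        simp only [hg]; linarith
      rw [intervalIntegral.integral_const, smul_eq_mul] at h2
      linarith [mul_comm (t - a) (b + c)]
  have hmono : StrictMono (fun t => ∫ u in s..t, g u) := by
    intro t₁ t₂ h
    have hadd : (∫ u in s..t₁, g u) + (∫ u in t₁..t₂, g u) = ∫ u in s..t₂, g u :=
      intervalIntegral.integral_add_adjacent_intervals (hint s t₁) (hint t₁ t₂)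
    have h1 := (hbound t₁ t₂ h.le).1
    have hpos : (0:ℝ) < (b - c) * (t₂ - t₁) := mul_pos (by linarith) (by linarith)
    simp only
    linarith
  have hmore : ∀ t : ℝ, s < t → (∫ u in s..t, g u) = Δ →
      Δ / (b + c) ≤ t - s ∧ t - s ≤ Δ / (b - c) := by
    intro t hst heq
    obtain ⟨h1, h2⟩ := hbound s t hst.le
    rw [heq] at h1 h2
    constructor
    · rw [div_le_iff₀ (by linarith)]; linarith [mul_comm (t - s) (b + c)]
    · rw [le_div_iff₀ (by linarith)]; linarith [mul_comm (t - s) (b - c)]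
  refine ⟨?_, hmore⟩
  have hbc' : (0:ℝ) < b - c := by linarith
  have hq : 0 < Δ / (b - c) := div_pos hΔ hbc'
  set T := s + Δ / (b - c) with hT
  have hsT : s ≤ T := by rw [hT]; linarith
  have hcont : ContinuousOn (fun t => ∫ u in s..t, g u) (Set.Icc s T) :=
    (intervalIntegral.continuous_primitive (fun a b => hint a b) s).continuousOn
  have hFs : (∫ u in s..s, g u) = 0 := intervalIntegral.integral_same
  have hFT : Δ ≤ ∫ u in s..T, g u := by
    have h := (hbound s T hsT).1
    have hTs : T - s = Δ / (b - c) := by rw [hT]; ring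
    rw [hTs, mul_div_cancel₀ _ (ne_of_gt hbc')] at h
    exact h
  have hmem : Δ ∈ Set.Icc ((∫ u in s..s, g u)) (∫ u in s..T, g u) := by
    rw [hFs]; exact ⟨hΔ.le, hFT⟩
  obtain ⟨t, ht, hFt⟩ := intermediate_value_Icc hsT hcont hmem
  have hFt' : (∫ u in s..t, g u) = Δ := hFt
  have hst : s < t := by
    rcases eq_or_lt_of_le ht.1 with h | h
    · exfalso; rw [← h, hFs] at hFt'; linarith
    · exact h
  refine ⟨t, ⟨hst, hFt'⟩, ?_⟩
  rintro t' ⟨_, h'⟩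
  exact hmono.injective (show (∫ u in s..t', g u) = (∫ u in s..t, g u) by rw [h', hFt'])
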